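/- arXiv:2603.20505 — 9 statements merged into one kernel-verified Lean document; each statement's English description precedes it below -/
import Mathlib

section
/- Let P = (R, F) be a ProbLog program, X : Finset ℕ an intervention set and x : ℕ → Bool an assignment; let R' be the sublist of R of clauses with head not in X and let Σ be the sum of the body lengths of the clauses of R'. Define the total size of a program as its number of facts plus its number of clauses plus its total number of body literals. Then the total size of S(P) equals (length F) + (card X) + (length R') + Σ, the total size of T(P) equals 2·(length F) + 2·(length R') + 2·Σ, and consequently the total size of S(P) is less than or equal to that of T(P) if and only if (card X) ≤ (length F) + (length R') + Σ, with strict inequality if and only if (card X) < (length F) + (length R') + Σ. -/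
/-- A clause: a head atom together with a body list of literals (atom, sign). -/
abbrev Clause (V : Type) := V × List (V × Bool)

/-- The probabilistic facts of the Twin Network transformation. -/
def twinFacts (X : Finset ℕ) (F : List (ℕ × ℝ)) : List ((ℕ ⊕ ℕ) × ℝ) :=
  F.flatMap fun f =>
    [(Sum.inl f.1, if f.1 ∈ X then 1 else f.2),
     (Sum.inr f.1, if f.1 ∈ X then 0 else f.2)]

/-- The clauses of the Twin Network transformation. -/
def twinClauses (X : Finset ℕ) (R : List (Clause ℕ)) : List (Clause (ℕ ⊕ ℕ)) :=
  (R.filter fun c => decide (c.1 ∉ X)).flatMap fun c =>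
    [(Sum.inl c.1, c.2.map fun l => ((Sum.inl l.1 : ℕ ⊕ ℕ), l.2)),
     (Sum.inr c.1, c.2.map fun l => ((Sum.inr l.1 : ℕ ⊕ ℕ), l.2))]

/-- The probabilistic facts of the SWIFT transformation. -/
noncomputable def swiftFacts (X : Finset ℕ) (x : ℕ → Bool) (F : List (ℕ × ℝ)) :
    List ((ℕ ⊕ ℕ) × ℝ) :=
  (F.map fun f => ((Sum.inl f.1 : ℕ ⊕ ℕ), f.2)) ++
    X.toList.map fun a => ((Sum.inr a : ℕ ⊕ ℕ), if x a then (1 : ℝ) else 0)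

/-- The clauses of the SWIFT transformation. -/
def swiftClauses (X : Finset ℕ) (R : List (Clause ℕ)) : List (Clause (ℕ ⊕ ℕ)) :=
  (R.filter fun c => decide (c.1 ∉ X)).map fun c =>
    ((Sum.inl c.1 : ℕ ⊕ ℕ),
      c.2.map fun l =>
        if l.1 ∈ X then ((Sum.inr l.1 : ℕ ⊕ ℕ), l.2) else ((Sum.inl l.1 : ℕ ⊕ ℕ), l.2))

/-- Total number of body literals of a clause list. -/
def bodySize {V : Type} (R : List (Clause V)) : ℕ := (R.map fun c => c.2.length).sum

/-- Total size of a program: number of facts plus number of clauses plus total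
number of body literals. -/
def totalSize {V : Type} (R : List (Clause V)) (F : List (V × ℝ)) : ℕ :=
  F.length + R.length + bodySize R


private lemma sum_flatMap_pair {α : Type*} (L : List α) (f g : α → ℕ) :
    (L.flatMap fun a => [f a, g a]).sum = (L.map f).sum + (L.map g).sum := by
  induction L with
  | nil => simp
  | cons a t ih => simp [ih]; ring

theorem swift_vs_twin_size (R : List (Clause ℕ)) (F : List (ℕ × ℝ))
    (hF : ∀ f ∈ F, 0 ≤ f.2 ∧ f.2 ≤ 1) (X : Finset ℕ) (x : ℕ → Bool) :
    totalSize (swiftClauses X R) (swiftFacts X x F)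
      = F.length + X.card + (R.filter fun c => decide (c.1 ∉ X)).length
          + bodySize (R.filter fun c => decide (c.1 ∉ X)) ∧
    totalSize (twinClauses X R) (twinFacts X F)
      = 2 * F.length + 2 * (R.filter fun c => decide (c.1 ∉ X)).length
          + 2 * bodySize (R.filter fun c => decide (c.1 ∉ X)) ∧
    (totalSize (swiftClauses X R) (swiftFacts X x F)
        ≤ totalSize (twinClauses X R) (twinFacts X F)
      ↔ X.card ≤ F.length + (R.filter fun c => decide (c.1 ∉ X)).length
          + bodySize (R.filter fun c => decide (c.1 ∉ X))) ∧
    (totalSize (swiftClauses X R) (swiftFacts X x F)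
        < totalSize (twinClauses X R) (twinFacts X F)
      ↔ X.card < F.length + (R.filter fun c => decide (c.1 ∉ X)).length
          + bodySize (R.filter fun c => decide (c.1 ∉ X))) := by
  set R' := R.filter fun c => decide (c.1 ∉ X) with hR'
  have hsf : (swiftFacts X x F).length = F.length + X.card := by
    simp [swiftFacts]
  have hsc : (swiftClauses X R).length = R'.length := by
    simp [swiftClauses, hR']
  have hsb : bodySize (swiftClauses X R) = bodySize R' := by
    simp [swiftClauses, bodySize, hR', Function.comp_def]
  have htf : (twinFacts X F).length = 2 * F.length := by
    simp [twinFacts, List.length_flatMap, Function.comp_def, List.map_const']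
    ring
  have htc : (twinClauses X R).length = 2 * R'.length := by
    simp [twinClauses, List.length_flatMap, hR', Function.comp_def, List.map_const']
    ring
  have htb : bodySize (twinClauses X R) = 2 * bodySize R' := by
    simp only [twinClauses, bodySize, hR', List.map_flatMap, Function.comp_def,
      List.map_cons, List.map_nil, List.length_map]
    rw [sum_flatMap_pair (List.filter (fun c => decide (c.1 ∉ X)) R) (fun c => c.2.length) (fun c => c.2.length)]
    ring
  have h1 : totalSize (swiftClauses X R) (swiftFacts X x F)
      = F.length + X.card + R'.length + bodySize R' := by
    simp [totalSize, hsf, hsc, hsb]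
  have h2 : totalSize (twinClauses X R) (twinFacts X F)
      = 2 * F.length + 2 * R'.length + 2 * bodySize R' := by
    simp [totalSize, htf, htc, htb]
  refine ⟨h1, h2, ?_, ?_⟩ <;> rw [h1, h2] <;> omega
end

section
/- Let P = (R, F) be a ProbLog program and X : Finset ℕ an intervention set, and let R' be the sublist of R of clauses with head not in X. In the primal graph of the clause list of the Twin Network transformation T(P) (a simple graph on ℕ ⊕ ℕ): (i) no vertex Sum.inl u is adjacent to any vertex Sum.inr v; (ii) Sum.inl u is adjacent to Sum.inl v if and only if u is adjacent to v in the primal graph of R'; (iii) Sum.inr u is adjacent to Sum.inr v if and only if u is adjacent to v in the primal graph of R'. Hence the primal graph of T(P) is the disjoint union of two copies of the primal graph of R'. -/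
/-- The atoms occurring in a clause: its head and the atoms of its body literals. -/
def clauseAtoms {V : Type} (c : Clause V) : List V := c.1 :: c.2.map Prod.fst

/-- The primal graph of a clause list: distinct atoms are adjacent iff they occur
together in some clause (head or body). -/
def primalGraph {V : Type} (R : List (Clause V)) : SimpleGraph V where
  Adj u v := u ≠ v ∧ ∃ c ∈ R, u ∈ clauseAtoms c ∧ v ∈ clauseAtoms c
  symm := by
    constructor
    rintro u v ⟨hne, c, hc, hu, hv⟩
    exact ⟨hne.symm, c, hc, hv, hu⟩
  loopless := by
    constructor
    rintro u ⟨hne, -⟩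
    exact hne rfl

lemma atoms_inl (c : Clause ℕ) :
    clauseAtoms ((Sum.inl c.1 : ℕ ⊕ ℕ), c.2.map fun l => ((Sum.inl l.1 : ℕ ⊕ ℕ), l.2))
      = (clauseAtoms c).map Sum.inl := by
  simp [clauseAtoms, List.map_map, Function.comp]

lemma atoms_inr (c : Clause ℕ) :
    clauseAtoms ((Sum.inr c.1 : ℕ ⊕ ℕ), c.2.map fun l => ((Sum.inr l.1 : ℕ ⊕ ℕ), l.2))
      = (clauseAtoms c).map Sum.inr := by
  simp [clauseAtoms, List.map_map, Function.comp]

theorem twin_primal_graph_decomposes (R : List (Clause ℕ)) (F : List (ℕ × ℝ))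
    (X : Finset ℕ) :
    (∀ u v : ℕ, ¬ (primalGraph (twinClauses X R)).Adj (Sum.inl u) (Sum.inr v)) ∧
    (∀ u v : ℕ, (primalGraph (twinClauses X R)).Adj (Sum.inl u) (Sum.inl v)
      ↔ (primalGraph (R.filter fun c => decide (c.1 ∉ X))).Adj u v) ∧
    (∀ u v : ℕ, (primalGraph (twinClauses X R)).Adj (Sum.inr u) (Sum.inr v)
      ↔ (primalGraph (R.filter fun c => decide (c.1 ∉ X))).Adj u v) := by
  set R' := R.filter fun c => decide (c.1 ∉ X) with hR'
  have hmem : ∀ c' : Clause (ℕ ⊕ ℕ), c' ∈ twinClauses X R ↔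
      ∃ c ∈ R', c' = ((Sum.inl c.1 : ℕ ⊕ ℕ), c.2.map fun l => ((Sum.inl l.1 : ℕ ⊕ ℕ), l.2))
        ∨ c' = ((Sum.inr c.1 : ℕ ⊕ ℕ), c.2.map fun l => ((Sum.inr l.1 : ℕ ⊕ ℕ), l.2)) := by
    intro c'
    simp only [twinClauses, List.mem_flatMap, List.mem_cons, List.mem_singleton,
      List.not_mem_nil, or_false, ← hR']
  refine ⟨?_, ?_, ?_⟩
  · rintro u v ⟨hne, c', hc', hu, hv⟩
    rcases (hmem c').1 hc' with ⟨c, hc, rfl | rfl⟩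
    · rw [atoms_inl] at hv; simp at hv
    · rw [atoms_inr] at hu; simp at hu
  · intro u v
    constructor
    · rintro ⟨hne, c', hc', hu, hv⟩
      rcases (hmem c').1 hc' with ⟨c, hc, rfl | rfl⟩
      · rw [atoms_inl] at hu hv
        simp only [List.mem_map, Sum.inl.injEq] at hu hv
        obtain ⟨a, ha, rfl⟩ := hu
        obtain ⟨b, hb, rfl⟩ := hv
        exact ⟨fun h => hne (by rw [h]), c, hc, ha, hb⟩
      · rw [atoms_inr] at hu; simp at hu
    · rintro ⟨hne, c, hc, hu, hv⟩
      refine ⟨by simpa using hne, _, (hmem _).2 ⟨c, hc, Or.inl rfl⟩, ?_, ?_⟩ <;>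
        · rw [atoms_inl]; simp only [List.mem_map, Sum.inl.injEq]
          first | exact ⟨u, hu, rfl⟩ | exact ⟨v, hv, rfl⟩
  · intro u v
    constructor
    · rintro ⟨hne, c', hc', hu, hv⟩
      rcases (hmem c').1 hc' with ⟨c, hc, rfl | rfl⟩
      · rw [atoms_inl] at hu; simp at hu
      · rw [atoms_inr] at hu hv
        simp only [List.mem_map, Sum.inr.injEq] at hu hv
        obtain ⟨a, ha, rfl⟩ := hu
        obtain ⟨b, hb, rfl⟩ := hv
        exact ⟨fun h => hne (by rw [h]), c, hc, ha, hb⟩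
    · rintro ⟨hne, c, hc, hu, hv⟩
      refine ⟨by simpa using hne, _, (hmem _).2 ⟨c, hc, Or.inr rfl⟩, ?_, ?_⟩ <;>
        · rw [atoms_inr]; simp only [List.mem_map, Sum.inr.injEq]
          first | exact ⟨u, hu, rfl⟩ | exact ⟨v, hv, rfl⟩
end

section
/- Let P = (R, F) be a ProbLog program, X : Finset ℕ an intervention set and x : ℕ → Bool an assignment, and define the projection π : ℕ ⊕ ℕ → ℕ by π (Sum.inl a) = a and π (Sum.inr a) = a. Then for every pair of atoms u, v that are adjacent in the primal graph of the clause list of the SWIFT transformation S(P), the atoms π u and π v are distinct and are adjacent in the primal graph of R. In other words, π maps the primal graph of S(P) edge-injectively into the primal graph of the original program, so the intervention deletes but never adds dependencies. -/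
/-- The projection collapsing the two copies of an atom. -/
def proj : ℕ ⊕ ℕ → ℕ := Sum.elim id id

lemma swift_atom_mem {X : Finset ℕ} (c : Clause ℕ) (hc : c.1 ∉ X) (u : ℕ ⊕ ℕ)
    (hu : u ∈ clauseAtoms ((Sum.inl c.1 : ℕ ⊕ ℕ),
      c.2.map fun l =>
        if l.1 ∈ X then ((Sum.inr l.1 : ℕ ⊕ ℕ), l.2) else ((Sum.inl l.1 : ℕ ⊕ ℕ), l.2))) :
    proj u ∈ clauseAtoms c ∧
      (∀ a, u = Sum.inl a → a ∉ X) ∧ (∀ a, u = Sum.inr a → a ∈ X) := by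
  simp only [clauseAtoms, List.map_map, List.mem_cons, List.mem_map] at hu ⊢
  rcases hu with rfl | ⟨l, hl, hlu⟩
  · exact ⟨Or.inl rfl, fun a ha => by cases ha; exact hc, fun a ha => by cases ha⟩
  · simp only [Function.comp] at hlu
    by_cases h : l.1 ∈ X <;> simp [h] at hlu <;> subst hlu
    · refine ⟨?_, ?_, ?_⟩
      · exact Or.inr ⟨l, hl, rfl⟩
      · intro a ha; cases ha
      · intro a ha; cases ha; exact h
    · refine ⟨?_, ?_, ?_⟩
      · exact Or.inr ⟨l, hl, rfl⟩
      · intro a ha; cases ha; exact h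
      · intro a ha; cases ha

theorem swift_primal_graph_edge_injective (R : List (Clause ℕ)) (F : List (ℕ × ℝ))
    (X : Finset ℕ) (x : ℕ → Bool) :
    ∀ u v : ℕ ⊕ ℕ, (primalGraph (swiftClauses X R)).Adj u v →
      proj u ≠ proj v ∧ (primalGraph R).Adj (proj u) (proj v) := by
  rintro u v ⟨hne, c', hc', hu, hv⟩
  simp only [swiftClauses, List.mem_map, List.mem_filter, decide_eq_true_eq] at hc'
  obtain ⟨c, ⟨hcR, hcX⟩, rfl⟩ := hc'
  obtain ⟨hu1, hu2, hu3⟩ := swift_atom_mem c hcX u hu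
  obtain ⟨hv1, hv2, hv3⟩ := swift_atom_mem c hcX v hv
  have hpne : proj u ≠ proj v := by
    intro h
    apply hne
    cases u with
    | inl a => cases v with
      | inl b => simp [proj] at h; subst h; rfl
      | inr b => simp [proj] at h; subst h; exact absurd (hv3 a rfl) (hu2 a rfl)
    | inr a => cases v with
      | inl b => simp [proj] at h; subst h; exact absurd (hu3 a rfl) (hv2 a rfl)
      | inr b => simp [proj] at h; subst h; rfl
  exact ⟨hpne, hpne, c, hcR, hu1, hv1⟩
end

section
/- Let l : ℕ and π : Fin l → ℝ with 0 ≤ π i for all i, and suppose that for every i, the partial sum ∑_{j < i} π j is strictly less than 1. Define p i := π i / (1 − ∑_{j < i} π j). Then for every i : Fin l, p i · ∏_{j < i} (1 − p j) = π i, and moreover ∏_{j} (1 − p j) = 1 − ∑_{j} π j. (Hence in the ProbLog encoding of an annotated disjunction by a sequence of independent auxiliary facts u_i with probabilities p i, the probability that the first true auxiliary fact is the i-th equals π i, and the probability that all auxiliary facts are false equals 1 − ∑ π j.) -/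
theorem riguzzi_problog_encoding
    (l : ℕ) (π : Fin l → ℝ) (hnn : ∀ i, 0 ≤ π i)
    (hlt : ∀ i : Fin l, ∑ j ∈ Finset.Iio i, π j < 1)
    (p : Fin l → ℝ)
    (hp : ∀ i, p i = π i / (1 - ∑ j ∈ Finset.Iio i, π j)) :
    (∀ i : Fin l, p i * ∏ j ∈ Finset.Iio i, (1 - p j) = π i) ∧
    ∏ j, (1 - p j) = 1 - ∑ j, π j := by
  have key : ∀ n, n ≤ l →
      ∏ j ∈ Finset.univ.filter (fun j : Fin l => (j : ℕ) < n), (1 - p j) =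
      1 - ∑ j ∈ Finset.univ.filter (fun j : Fin l => (j : ℕ) < n), π j := by
    intro n hn
    induction n with
    | zero => simp
    | succ m ih =>
      have hm : m < l := hn
      have hset : (Finset.univ.filter (fun j : Fin l => (j : ℕ) < m + 1)) =
          insert ⟨m, hm⟩ (Finset.univ.filter (fun j : Fin l => (j : ℕ) < m)) := by
        ext j
        simp [Nat.lt_succ_iff_lt_or_eq, Fin.ext_iff, or_comm]
        constructor <;> intro h <;> omega
      have hIio : Finset.Iio (⟨m, hm⟩ : Fin l) =
          Finset.univ.filter (fun j : Fin l => (j : ℕ) < m) := by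
        ext j; simp [Fin.lt_def]
      have hnotmem : (⟨m, hm⟩ : Fin l) ∉
          Finset.univ.filter (fun j : Fin l => (j : ℕ) < m) := by simp
      have hS := hlt ⟨m, hm⟩
      rw [hIio] at hS
      have hne : (1 : ℝ) - ∑ j ∈ Finset.univ.filter (fun j : Fin l => (j : ℕ) < m), π j ≠ 0 :=
        by linarith
      have ihm := ih (le_of_lt hm)
      rw [hset, Finset.prod_insert hnotmem, Finset.sum_insert hnotmem, ihm,
        hp ⟨m, hm⟩, hIio]
      field_simp
      ring
  have keyI : ∀ i : Fin l, ∏ j ∈ Finset.Iio i, (1 - p j) =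
      1 - ∑ j ∈ Finset.Iio i, π j := by
    intro i
    have hIio : Finset.Iio i = Finset.univ.filter (fun j : Fin l => (j : ℕ) < i) := by
      ext j
      simp only [Finset.mem_Iio, Finset.mem_filter, Finset.mem_univ, true_and, Fin.lt_def]
    rw [hIio, key i (le_of_lt i.isLt), ← hIio]
  constructor
  · intro i
    have hS := hlt i
    have hne : (1 : ℝ) - ∑ j ∈ Finset.Iio i, π j ≠ 0 := by linarith
    rw [keyI i, hp i, div_mul_cancel₀ _ hne]
  · have huniv : (Finset.univ : Finset (Fin l)) =
        Finset.univ.filter (fun j : Fin l => (j : ℕ) < l) := by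
      ext j; simp [j.isLt]
    rw [huniv, key l le_rfl]
end

section
/- Let V be a type of atoms and R a list of clauses over V such that the dependency relation of R (relating a ≺ h iff a is the atom of some body literal of a clause of R with head h) is well-founded. Then for every assignment e : V → Bool there exists a unique assignment f : V → Bool that is a supported model of R extending e; that is, f agrees with e on every external atom, and for every internal atom h, f h = true if and only if some clause (h, B) ∈ R has every literal of B satisfied by f. -/
/-- The dependency relation of a clause list: `Dep R a h` holds iff `a` is the
atom of some body literal of a clause of `R` with head `h`. -/
def Dep {V : Type} (R : List (Clause V)) (a h : V) : Prop :=
  ∃ c ∈ R, c.1 = h ∧ a ∈ c.2.map Prod.fst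

/-- `f` is a supported model of `R` extending `e`: `f` agrees with `e` on every
external atom (atom heading no clause of `R`), and every internal atom `h` is true
under `f` iff some clause with head `h` has all its body literals satisfied by `f`. -/
def IsSupportedModel {V : Type} (R : List (Clause V)) (e f : V → Bool) : Prop :=
  (∀ a : V, (∀ c ∈ R, c.1 ≠ a) → f a = e a) ∧
  (∀ h : V, (∃ c ∈ R, c.1 = h) →
    (f h = true ↔ ∃ c ∈ R, c.1 = h ∧ ∀ l ∈ c.2, f l.1 = l.2))

open Classical in
noncomputable def modelF {V : Type} (R : List (Clause V)) (hwf : WellFounded (Dep R))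
    (e : V → Bool) : V → Bool :=
  hwf.fix (fun h rec =>
    if _hint : ∃ c ∈ R, c.1 = h then
      decide (∃ c, ∃ hc : c ∈ R, ∃ he : c.1 = h,
        ∀ l, ∀ hl : l ∈ c.2, rec l.1 ⟨c, hc, he, List.mem_map.mpr ⟨l, hl, rfl⟩⟩ = l.2)
    else e h)

open Classical in
theorem modelF_eq {V : Type} (R : List (Clause V)) (hwf : WellFounded (Dep R))
    (e : V → Bool) (h : V) :
    modelF R hwf e h =
      if _hint : ∃ c ∈ R, c.1 = h then
        decide (∃ c ∈ R, c.1 = h ∧ ∀ l ∈ c.2, modelF R hwf e l.1 = l.2)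
      else e h := by
  rw [modelF, WellFounded.fix_eq]
  by_cases hint : ∃ c ∈ R, c.1 = h
  · simp only [dif_pos hint]
    congr 1
    apply propext
    constructor
    · rintro ⟨c, hc, he, hb⟩
      exact ⟨c, hc, he, fun l hl => hb l hl⟩
    · rintro ⟨c, hc, he, hb⟩
      exact ⟨c, hc, he, fun l hl => hb l hl⟩
  · simp only [dif_neg hint]

theorem unique_supported_model {V : Type} (R : List (Clause V))
    (hwf : WellFounded (Dep R)) (e : V → Bool) :
    ∃! f : V → Bool, IsSupportedModel R e f := by
  refine ⟨modelF R hwf e, ⟨?_, ?_⟩, ?_⟩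
  · intro a ha
    rw [modelF_eq]
    rw [dif_neg]
    rintro ⟨c, hc, he⟩
    exact ha c hc he
  · intro h hint
    rw [modelF_eq, dif_pos hint]
    simp
  · intro g hg
    funext a
    induction a using hwf.induction with
    | _ a ih =>
      by_cases hint : ∃ c ∈ R, c.1 = a
      · have h1 := hg.2 a hint
        have h2 : modelF R hwf e a = true ↔
            ∃ c ∈ R, c.1 = a ∧ ∀ l ∈ c.2, modelF R hwf e l.1 = l.2 := by
          rw [modelF_eq, dif_pos hint]; simp
        have key : (g a = true) ↔ (modelF R hwf e a = true) := by
          rw [h1, h2]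
          constructor <;> rintro ⟨c, hc, he, hb⟩ <;>
            refine ⟨c, hc, he, fun l hl => ?_⟩
          · rw [← ih l.1 ⟨c, hc, he, List.mem_map.mpr ⟨l, hl, rfl⟩⟩]; exact hb l hl
          · rw [ih l.1 ⟨c, hc, he, List.mem_map.mpr ⟨l, hl, rfl⟩⟩]; exact hb l hl
        cases hga : g a <;> cases hfa : modelF R hwf e a <;> simp_all
      · push_neg at hint
        rw [hg.1 a hint]
        rw [modelF_eq, dif_neg]
        push_neg; exact hint
end

section
/- Let V be a type of atoms, let R and R' be lists of clauses over V whose dependency relations are well-founded, let X : Set V, and suppose that R and R' contain exactly the same clauses with head outside X. Let H denote the set of atoms that are the head of some clause of R with head outside X. If f is a supported model of R extending some e, f' is a supported model of R' extending some e', and f and f' agree on every atom not in H (in particular on all atoms of X and on all atoms external to both programs), then f = f'. -/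
theorem supported_model_modularity {V : Type} (R R' : List (Clause V))
    (hwf : WellFounded (Dep R)) (hwf' : WellFounded (Dep R'))
    (X : Set V)
    (hsame : ∀ c : Clause V, c.1 ∉ X → (c ∈ R ↔ c ∈ R'))
    (e e' f f' : V → Bool)
    (hf : IsSupportedModel R e f) (hf' : IsSupportedModel R' e' f')
    (hagree : ∀ a : V, a ∉ {h : V | ∃ c ∈ R, c.1 = h ∧ h ∉ X} → f a = f' a) :
    f = f' := by
  funext a
  induction a using hwf.induction with
  | _ h IH =>
    by_cases hH : h ∈ {h : V | ∃ c ∈ R, c.1 = h ∧ h ∉ X}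
    · obtain ⟨c, hcR, hch, hX⟩ := hH
      have hcR' : c ∈ R' := (hsame c (hch ▸ hX)).1 hcR
      have h1 := hf.2 h ⟨c, hcR, hch⟩
      have h2 := hf'.2 h ⟨c, hcR', hch⟩
      have key : (∃ c ∈ R, c.1 = h ∧ ∀ l ∈ c.2, f l.1 = l.2) ↔
          (∃ c ∈ R', c.1 = h ∧ ∀ l ∈ c.2, f' l.1 = l.2) := by
        constructor
        · rintro ⟨d, hdR, hdh, hb⟩
          refine ⟨d, (hsame d (hdh ▸ hX)).1 hdR, hdh, fun l hl => ?_⟩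
          have := IH l.1 ⟨d, hdR, hdh, List.mem_map_of_mem (f := Prod.fst) hl⟩
          rw [← this]; exact hb l hl
        · rintro ⟨d, hdR', hdh, hb⟩
          have hdR : d ∈ R := (hsame d (hdh ▸ hX)).2 hdR'
          refine ⟨d, hdR, hdh, fun l hl => ?_⟩
          have := IH l.1 ⟨d, hdR, hdh, List.mem_map_of_mem (f := Prod.fst) hl⟩
          rw [this]; exact hb l hl
      have hiff := h1.trans (key.trans h2.symm)
      cases hb : f h
      · cases hb' : f' h
        · rfl
        · exact absurd (hiff.mpr hb') (by simp [hb])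
      · exact (hiff.mp hb).symm
    · exact hagree h hH
end

section
/- Let P = (R, F) be a ProbLog program over atoms ℕ such that the dependency relation of R is well-founded and no fact atom of F is the head of any clause of R. Let X : Finset ℕ and x : ℕ → Bool, let R_x be the sublist of R of clauses with head not in X (the intervened program, in which the atoms of X become external), and let S(P) be the SWIFT transformation of P. Then (i) the dependency relation of the clause list of S(P) is well-founded; and (ii) for every assignment ε : ℕ → Bool, if m is the supported model of the clause list of S(P) extending the assignment sending Sum.inl a to ε a and Sum.inr a to x a, and m_x is the supported model of R_x extending the assignment sending a to x a when a ∈ X and to ε a otherwise, then m (Sum.inl a) = m_x a for every atom a ∉ X, and m (Sum.inr a) = x a for every a ∈ X. -/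
lemma mem_swiftClauses {X : Finset ℕ} {R : List (Clause ℕ)} {c' : Clause (ℕ ⊕ ℕ)} :
    c' ∈ swiftClauses X R ↔ ∃ c ∈ R, c.1 ∉ X ∧
      c' = ((Sum.inl c.1 : ℕ ⊕ ℕ),
        c.2.map fun l =>
          if l.1 ∈ X then ((Sum.inr l.1 : ℕ ⊕ ℕ), l.2) else ((Sum.inl l.1 : ℕ ⊕ ℕ), l.2)) := by
  constructor
  · intro h
    simp only [swiftClauses, List.mem_map] at h
    obtain ⟨c, hc, rfl⟩ := h
    rw [List.mem_filter] at hc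
    exact ⟨c, hc.1, by simpa using hc.2, rfl⟩
  · rintro ⟨c, hc, hX, rfl⟩
    simp only [swiftClauses, List.mem_map]
    exact ⟨c, List.mem_filter.2 ⟨hc, by simpa⟩, rfl⟩

theorem swip_world_level_correctness (R : List (Clause ℕ)) (F : List (ℕ × ℝ))
    (hwf : WellFounded (Dep R))
    (hfact : ∀ f ∈ F, ∀ c ∈ R, c.1 ≠ f.1)
    (X : Finset ℕ) (x : ℕ → Bool) :
    WellFounded (Dep (swiftClauses X R)) ∧
    ∀ (ε : ℕ → Bool) (m : ℕ ⊕ ℕ → Bool) (mx : ℕ → Bool),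
      IsSupportedModel (swiftClauses X R) (Sum.elim ε x) m →
      IsSupportedModel (R.filter fun c => decide (c.1 ∉ X))
        (fun a => if a ∈ X then x a else ε a) mx →
      (∀ a ∉ X, m (Sum.inl a) = mx a) ∧ (∀ a ∈ X, m (Sum.inr a) = x a) := by
  have hinr : ∀ a : ℕ, Acc (Dep (swiftClauses X R)) (Sum.inr a) := by
    intro a
    constructor
    rintro y ⟨c, hc, hhead, _⟩
    rw [mem_swiftClauses] at hc
    obtain ⟨d, hd, hdX, rfl⟩ := hc
    simp at hhead
  constructor
  · have hinl : ∀ a : ℕ, Acc (Dep (swiftClauses X R)) (Sum.inl a) := by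
      intro a
      induction a using hwf.induction with
      | _ a ih =>
        constructor
        rintro y ⟨c, hc, hhead, hy⟩
        rw [mem_swiftClauses] at hc
        obtain ⟨d, hd, hdX, rfl⟩ := hc
        simp only [Sum.inl.injEq] at hhead
        simp only [List.map_map, List.mem_map, Function.comp] at hy
        obtain ⟨l, hl, hly⟩ := hy
        by_cases hX : l.1 ∈ X
        · simp [hX] at hly; subst hly; exact hinr _
        · simp [hX] at hly; subst hly
          exact ih l.1 ⟨d, hd, hhead, List.mem_map.2 ⟨l, hl, rfl⟩⟩
    constructor
    rintro (a | a)
    · exact hinl a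
    · exact hinr a
  · intro ε m mx hm hmx
    have hmr : ∀ a : ℕ, m (Sum.inr a) = x a := by
      intro a
      have := hm.1 (Sum.inr a) ?_
      · simpa using this
      · rintro c' hc'
        rw [mem_swiftClauses] at hc'
        obtain ⟨d, hd, hdX, rfl⟩ := hc'
        simp
    have hmxX : ∀ b ∈ X, mx b = x b := by
      intro b hb
      have := hmx.1 b ?_
      · simpa [hb] using this
      · intro c hc
        simp only [List.mem_filter, decide_eq_true_eq] at hc
        intro h; exact hc.2 (h ▸ hb)
    have hmain : ∀ a : ℕ, a ∉ X → m (Sum.inl a) = mx a := by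
      intro a
      induction a using hwf.induction with
      | _ a ih =>
        intro haX
        by_cases hhead : ∃ c ∈ R, c.1 = a
        · obtain ⟨c0, hc0, hc0h⟩ := hhead
          have h1 := hm.2 (Sum.inl a) ⟨_, mem_swiftClauses.2 ⟨c0, hc0, hc0h ▸ haX, rfl⟩,
            by simp [hc0h]⟩
          have h2 := hmx.2 a ⟨c0, List.mem_filter.2 ⟨hc0, by simp [hc0h, haX]⟩, hc0h⟩
          have key : (m (Sum.inl a) = true) ↔ (mx a = true) := by
            rw [h1, h2]
            constructor
            · rintro ⟨c', hc', hh, hb⟩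
              rw [mem_swiftClauses] at hc'
              obtain ⟨d, hd, hdX, rfl⟩ := hc'
              simp only [Sum.inl.injEq] at hh
              refine ⟨d, List.mem_filter.2 ⟨hd, by simpa using hdX⟩, hh, ?_⟩
              intro l hl
              have hb' := hb (if l.1 ∈ X then ((Sum.inr l.1 : ℕ ⊕ ℕ), l.2)
                else ((Sum.inl l.1 : ℕ ⊕ ℕ), l.2)) (List.mem_map.2 ⟨l, hl, rfl⟩)
              by_cases hX : l.1 ∈ X
              · simp [hX] at hb'
                rw [hmxX l.1 hX, ← hmr l.1]; exact hb'
              · simp [hX] at hb'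
                rw [← ih l.1 ⟨d, hd, hh, List.mem_map.2 ⟨l, hl, rfl⟩⟩ hX]
                exact hb'
            · rintro ⟨d, hd, hh, hb⟩
              rw [List.mem_filter] at hd
              have hdX : d.1 ∉ X := by simpa using hd.2
              refine ⟨_, mem_swiftClauses.2 ⟨d, hd.1, hdX, rfl⟩, by simp [hh], ?_⟩
              intro l' hl'
              simp only [List.mem_map] at hl'
              obtain ⟨l, hl, rfl⟩ := hl'
              by_cases hX : l.1 ∈ X
              · simp [hX, hmr l.1, ← hmxX l.1 hX]
                exact hb l hl
              · simp [hX]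
                rw [ih l.1 ⟨d, hd.1, hh, List.mem_map.2 ⟨l, hl, rfl⟩⟩ hX]
                exact hb l hl
          cases hma : m (Sum.inl a) <;> cases hmxa : mx a <;> simp_all
        · have e1 := hm.1 (Sum.inl a) ?_
          · have e2 := hmx.1 a ?_
            · simp only [Sum.elim_inl] at e1
              rw [e1, e2]; simp [haX]
            · intro c hc
              rw [List.mem_filter] at hc
              exact fun h => hhead ⟨c, hc.1, h⟩
          · rintro c' hc'
            rw [mem_swiftClauses] at hc'
            obtain ⟨d, hd, hdX, rfl⟩ := hc'
            simp only [ne_eq, Sum.inl.injEq]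
            exact fun h => hhead ⟨d, hd, h⟩
    exact ⟨hmain, fun a _ => hmr a⟩
end

section
/- Let P = (R, F) be a ProbLog program over atoms ℕ with F a finite list of facts (a_1, p_1), …, (a_n, p_n) with distinct atoms and p_i ∈ [0,1], such that the dependency relation of R is well-founded and no fact atom is the head of any clause. Let X : Finset ℕ, x : ℕ → Bool, let R_x be the sublist of R of clauses with head not in X, and let S(P) be the SWIFT transformation. For a world ε : Fin n → Bool define its weight π(ε) = ∏_i (p_i if ε i = true, else 1 − p_i); let m_S(ε) be the supported model of the clause list of S(P) extending the assignment sending Sum.inl a_i to ε i, all other Sum.inl atoms to false, and Sum.inr a to x a; and let m_x(ε) be the supported model of R_x extending the assignment sending a_i to ε i, atoms of X to x, and all other atoms to false. Then for every predicate φ : (ℕ → Bool) → Prop that depends only on the values of atoms not in X, the sum over all worlds ε of π(ε) · [φ (fun a => m_S(ε) (Sum.inl a))] equals the sum over all worlds ε of π(ε) · [φ (m_x(ε))]. That is, marginal inference on the SWIP computes exactly the interventional distribution P(φ | do(X := x)) of the encoded structural causal model. -/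
/-- The weight of a world `ε` (a truth assignment to the probabilistic facts):
the product of `p_i` over true facts and `1 - p_i` over false facts. -/
def worldWeight (F : List (ℕ × ℝ)) (ε : Fin F.length → Bool) : ℝ :=
  ∏ i : Fin F.length, if ε i then (F.get i).2 else 1 - (F.get i).2

/-- The assignment on atoms induced by a world: the `i`-th fact atom gets `ε i`,
every other atom gets `false`. -/
def factAssign (F : List (ℕ × ℝ)) (ε : Fin F.length → Bool) (a : ℕ) : Bool :=
  match (List.finRange F.length).find? (fun i => (F.get i).1 == a) with
  | some i => ε i
  | none => false

theorem swip_computes_interventional_distribution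
    (R : List (Clause ℕ)) (F : List (ℕ × ℝ))
    (hdistinct : (F.map Prod.fst).Nodup)
    (hprob : ∀ f ∈ F, 0 ≤ f.2 ∧ f.2 ≤ 1)
    (hwf : WellFounded (Dep R))
    (hfact : ∀ f ∈ F, ∀ c ∈ R, c.1 ≠ f.1)
    (X : Finset ℕ) (x : ℕ → Bool)
    (mS : (Fin F.length → Bool) → (ℕ ⊕ ℕ) → Bool)
    (mx : (Fin F.length → Bool) → ℕ → Bool)
    (hmS : ∀ ε, IsSupportedModel (swiftClauses X R)
      (Sum.elim (factAssign F ε) x) (mS ε))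
    (hmx : ∀ ε, IsSupportedModel (R.filter fun c => decide (c.1 ∉ X))
      (fun a => if a ∈ X then x a else factAssign F ε a) (mx ε))
    (φ : (ℕ → Bool) → Prop) [DecidablePred φ]
    (hφ : ∀ f g : ℕ → Bool, (∀ a ∉ X, f a = g a) → (φ f ↔ φ g)) :
    ∑ ε : Fin F.length → Bool,
        worldWeight F ε * (if φ (fun a => mS ε (Sum.inl a)) then 1 else 0)
      = ∑ ε : Fin F.length → Bool,
          worldWeight F ε * (if φ (mx ε) then 1 else 0) := by
  have main : ∀ ε, (φ (fun a => mS ε (Sum.inl a)) ↔ φ (mx ε)) := by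
    intro ε
    obtain ⟨hS1, hS2⟩ := hmS ε
    obtain ⟨hx1, hx2⟩ := hmx ε
    -- characterize membership in swiftClauses
    have hmem : ∀ c', c' ∈ swiftClauses X R →
        ∃ d, d ∈ R ∧ d.1 ∉ X ∧
          c' = ((Sum.inl d.1 : ℕ ⊕ ℕ),
            d.2.map fun l => if l.1 ∈ X then ((Sum.inr l.1 : ℕ ⊕ ℕ), l.2)
              else ((Sum.inl l.1 : ℕ ⊕ ℕ), l.2)) := by
      intro c' hc'
      simp only [swiftClauses, List.mem_map, List.mem_filter, decide_eq_true_eq] at hc'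
      obtain ⟨d, ⟨hdR, hdX⟩, hd⟩ := hc'
      exact ⟨d, hdR, hdX, hd.symm⟩
    -- Sum.inr atoms are never heads
    have hinr : ∀ b, mS ε (Sum.inr b) = x b := by
      intro b
      have h := hS1 (Sum.inr b) ?_
      · simpa using h
      · intro c hc
        obtain ⟨d, _, _, hd⟩ := hmem c hc
        subst hd; simp
    -- atoms in X get x under mx
    have hmxX : ∀ b ∈ X, mx ε b = x b := by
      intro b hb
      have h := hx1 b ?_
      · simpa [hb] using h
      · intro c hc hcb
        rw [List.mem_filter] at hc
        have := hc.2
        simp only [decide_eq_true_eq] at this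
        exact this (hcb ▸ hb)
    have key : ∀ h : ℕ, h ∉ X → mS ε (Sum.inl h) = mx ε h := by
      intro h
      refine hwf.induction (C := fun h => h ∉ X → mS ε (Sum.inl h) = mx ε h) h ?_
      intro h IH hX
      by_cases hhead : ∃ c ∈ R, c.1 = h
      · obtain ⟨c0, hc0R, hc0h⟩ := hhead
        have hc0f : c0 ∈ R.filter fun c => decide (c.1 ∉ X) := by
          rw [List.mem_filter]
          exact ⟨hc0R, by simpa [hc0h] using hX⟩
        have hswift : ((Sum.inl c0.1 : ℕ ⊕ ℕ),
            c0.2.map fun l => if l.1 ∈ X then ((Sum.inr l.1 : ℕ ⊕ ℕ), l.2)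
              else ((Sum.inl l.1 : ℕ ⊕ ℕ), l.2)) ∈ swiftClauses X R := by
          simp only [swiftClauses, List.mem_map]
          exact ⟨c0, hc0f, rfl⟩
        have hiffS := hS2 (Sum.inl h) ⟨_, hswift, by simp [hc0h]⟩
        have hiffx := hx2 h ⟨c0, hc0f, hc0h⟩
        -- body equivalence for any clause d ∈ R with head h, d.1 ∉ X
        have hbody : ∀ d, d ∈ R → d.1 = h →
            ((∀ l' ∈ d.2.map fun l => if l.1 ∈ X then ((Sum.inr l.1 : ℕ ⊕ ℕ), l.2)
                else ((Sum.inl l.1 : ℕ ⊕ ℕ), l.2), mS ε l'.1 = l'.2)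
              ↔ (∀ l ∈ d.2, mx ε l.1 = l.2)) := by
          intro d hdR hdh
          rw [List.forall_mem_map]
          refine forall₂_congr fun l hl => ?_
          have hval : mS ε (if l.1 ∈ X then ((Sum.inr l.1 : ℕ ⊕ ℕ), l.2)
              else ((Sum.inl l.1 : ℕ ⊕ ℕ), l.2)).1 = mx ε l.1 := by
            by_cases hlX : l.1 ∈ X
            · simp [hlX, hinr, hmxX l.1 hlX]
            · have hdep : Dep R l.1 h :=
                ⟨d, hdR, hdh, List.mem_map.mpr ⟨l, hl, rfl⟩⟩
              simpa [hlX] using IH l.1 hdep hlX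
          constructor
          · intro h'; rw [← hval, h']
            by_cases hlX : l.1 ∈ X <;> simp [hlX]
          · intro h'; rw [hval, h']
            by_cases hlX : l.1 ∈ X <;> simp [hlX]
        rw [Bool.eq_iff_iff, hiffS, hiffx]
        constructor
        · rintro ⟨c', hc', hch, hcb⟩
          obtain ⟨d, hdR, hdX, hd⟩ := hmem c' hc'
          subst hd
          simp only [Sum.inl.injEq] at hch
          have hdf : d ∈ R.filter fun c => decide (c.1 ∉ X) :=
            List.mem_filter.mpr ⟨hdR, by simpa using hdX⟩
          exact ⟨d, hdf, hch, (hbody d hdR hch).mp hcb⟩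
        · rintro ⟨d, hdf, hdh, hdb⟩
          rw [List.mem_filter] at hdf
          have hdX : d.1 ∉ X := by simpa using hdf.2
          refine ⟨((Sum.inl d.1 : ℕ ⊕ ℕ),
            d.2.map fun l => if l.1 ∈ X then ((Sum.inr l.1 : ℕ ⊕ ℕ), l.2)
              else ((Sum.inl l.1 : ℕ ⊕ ℕ), l.2)),
            ?_, congrArg Sum.inl hdh, (hbody d hdf.1 hdh).mpr hdb⟩
          simp only [swiftClauses, List.mem_map]
          exact ⟨d, List.mem_filter.mpr ⟨hdf.1, by simpa using hdX⟩, rfl⟩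
      · -- h is not the head of any clause
        push_neg at hhead
        have h1 : mS ε (Sum.inl h) = factAssign F ε h := by
          have := hS1 (Sum.inl h) ?_
          · simpa using this
          · intro c hc
            obtain ⟨d, hdR, _, hd⟩ := hmem c hc
            subst hd
            simp only [ne_eq, Sum.inl.injEq]
            exact hhead d hdR
        have h2 : mx ε h = factAssign F ε h := by
          have := hx1 h ?_
          · simpa [hX] using this
          · intro c hc
            exact hhead c (List.mem_filter.mp hc).1
        rw [h1, h2]
    exact hφ _ _ fun a ha => key a ha
  refine Finset.sum_congr rfl fun ε _ => ?_
  congr 1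
  exact if_congr (main ε) rfl rfl
end

section
/- Let P = (R, F) be a ProbLog program over atoms ℕ, X : Finset ℕ an intervention set, R' the sublist of R of clauses with head not in X, and T(P) the Twin Network transformation over atoms ℕ ⊕ ℕ. Suppose the dependency relation of R is well-founded. Then for every assignment e : (ℕ ⊕ ℕ) → Bool, the supported model m of the clause list of T(P) extending e decomposes: the function (fun a => m (Sum.inl a)) is the supported model of R' extending (fun a => e (Sum.inl a)), and the function (fun a => m (Sum.inr a)) is the supported model of R' extending (fun a => e (Sum.inr a)). In particular, because no clause of T(P) mentions both an inl-atom and an inr-atom, the factual and counterfactual halves of the Twin Network program interact only through their shared external assignment. -/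
lemma mem_twinClauses {X : Finset ℕ} {R : List (Clause ℕ)} {c' : Clause (ℕ ⊕ ℕ)} :
    c' ∈ twinClauses X R ↔ ∃ c ∈ R.filter (fun c => decide (c.1 ∉ X)),
      c' = (Sum.inl c.1, c.2.map fun l => ((Sum.inl l.1 : ℕ ⊕ ℕ), l.2)) ∨
      c' = (Sum.inr c.1, c.2.map fun l => ((Sum.inr l.1 : ℕ ⊕ ℕ), l.2)) := by
  simp [twinClauses, List.mem_flatMap]

theorem twin_network_supported_model_decomposes
    (R : List (Clause ℕ)) (F : List (ℕ × ℝ)) (X : Finset ℕ)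
    (hwf : WellFounded (Dep R))
    (e m : ℕ ⊕ ℕ → Bool)
    (hm : IsSupportedModel (twinClauses X R) e m) :
    IsSupportedModel (R.filter fun c => decide (c.1 ∉ X))
      (fun a => e (Sum.inl a)) (fun a => m (Sum.inl a)) ∧
    IsSupportedModel (R.filter fun c => decide (c.1 ∉ X))
      (fun a => e (Sum.inr a)) (fun a => m (Sum.inr a)) := by
  obtain ⟨h1, h2⟩ := hm
  constructor
  · constructor
    · intro a ha
      apply h1
      intro c' hc'
      obtain ⟨c, hc, hcase⟩ := mem_twinClauses.mp hc'
      rcases hcase with rfl | rfl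
      · simpa using ha c hc
      · simp
    · intro h ⟨c, hc, hch⟩
      have hmem : (Sum.inl c.1, c.2.map fun l => ((Sum.inl l.1 : ℕ ⊕ ℕ), l.2)) ∈
          twinClauses X R := mem_twinClauses.mpr ⟨c, hc, Or.inl rfl⟩
      rw [h2 (Sum.inl h) ⟨_, hmem, by simp [hch]⟩]
      constructor
      · rintro ⟨c', hc', hhead, hbody⟩
        obtain ⟨d, hd, hcase⟩ := mem_twinClauses.mp hc'
        rcases hcase with rfl | rfl
        · refine ⟨d, hd, by simpa using hhead, ?_⟩
          intro l hl
          simpa using hbody _ (List.mem_map_of_mem hl)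
        · simp at hhead
      · rintro ⟨d, hd, hhead, hbody⟩
        refine ⟨_, mem_twinClauses.mpr ⟨d, hd, Or.inl rfl⟩, by simp [hhead], ?_⟩
        intro l hl
        simp only [List.mem_map] at hl
        obtain ⟨l', hl', rfl⟩ := hl
        simpa using hbody l' hl'
  · constructor
    · intro a ha
      apply h1
      intro c' hc'
      obtain ⟨c, hc, hcase⟩ := mem_twinClauses.mp hc'
      rcases hcase with rfl | rfl
      · simp
      · simpa using ha c hc
    · intro h ⟨c, hc, hch⟩
      have hmem : (Sum.inr c.1, c.2.map fun l => ((Sum.inr l.1 : ℕ ⊕ ℕ), l.2)) ∈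
          twinClauses X R := mem_twinClauses.mpr ⟨c, hc, Or.inr rfl⟩
      rw [h2 (Sum.inr h) ⟨_, hmem, by simp [hch]⟩]
      constructor
      · rintro ⟨c', hc', hhead, hbody⟩
        obtain ⟨d, hd, hcase⟩ := mem_twinClauses.mp hc'
        rcases hcase with rfl | rfl
        · simp at hhead
        · refine ⟨d, hd, by simpa using hhead, ?_⟩
          intro l hl
          simpa using hbody _ (List.mem_map_of_mem hl)
      · rintro ⟨d, hd, hhead, hbody⟩
        refine ⟨_, mem_twinClauses.mpr ⟨d, hd, Or.inr rfl⟩, by simp [hhead], ?_⟩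
        intro l hl
        simp only [List.mem_map] at hl
        obtain ⟨l', hl', rfl⟩ := hl
        simpa using hbody l' hl'
end
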